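/- The complete p-partite graph K_{n/p,...,n/p} on n vertices (p parts of size n/p, p ≥ 2) has routing number at most 6. -/

import Mathlib

open Finset

variable {V : Type*}

/-- A stage of a sorting network on a graph `G`: a finite set of vertex-disjoint
edges of `G`, each either directed (compare-exchange) or undirected (swap). -/
structure Stage {V : Type*} (G : SimpleGraph V) where
  pairs : Finset (V × V)
  adj : ∀ p ∈ pairs, G.Adj p.1 p.2
  directed : V × V → Bool
  disj : ∀ p ∈ pairs, ∀ q ∈ pairs, p ≠ q →
    p.1 ≠ q.1 ∧ p.1 ≠ q.2 ∧ p.2 ≠ q.1 ∧ p.2 ≠ q.2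

open scoped Classical in
/-- Apply a stage to a configuration of keys `f : V → ℕ`.  For a directed pair
`(u,v)` the smaller key goes to `u` and the larger to `v`; an undirected pair
unconditionally swaps its keys. -/
noncomputable def Stage.apply {G : SimpleGraph V} (s : Stage G) (f : V → ℕ) (v : V) : ℕ :=
  if h1 : ∃ p, p ∈ s.pairs ∧ p.1 = v then
    (if s.directed h1.choose then min (f h1.choose.1) (f h1.choose.2) else f h1.choose.2)
  else if h2 : ∃ p, p ∈ s.pairs ∧ p.2 = v then
    (if s.directed h2.choose then max (f h2.choose.1) (f h2.choose.2) else f h2.choose.1)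
  else f v

noncomputable def runNetwork {G : SimpleGraph V} (L : List (Stage G)) (f : V → ℕ) : V → ℕ :=
  L.foldl (fun g s => s.apply g) f

/-- `L` is a sorting network on `(G, π)`: for every injective assignment of keys,
after running all stages, the key at a vertex of smaller `π`-rank is smaller. -/
def IsSortingNetwork {n : ℕ} (G : SimpleGraph V) (π : V ≃ Fin n) (L : List (Stage G)) : Prop :=
  ∀ f : V → ℕ, Function.Injective f →
    ∀ u w : V, π u < π w → runNetwork L f u < runNetwork L f w

/-- Minimal depth of a sorting network on `(G, π)`. -/
noncomputable def stP {n : ℕ} (G : SimpleGraph V) (π : V ≃ Fin n) : ℕ :=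
  sInf {t | ∃ L : List (Stage G), L.length = t ∧ IsSortingNetwork G π L}

/-- The sorting number of `G` : the minimum over sorted orders `π` of the
minimal depth of a sorting network on `(G, π)`. -/
noncomputable def st [Fintype V] (G : SimpleGraph V) : ℕ :=
  sInf {t | ∃ π : V ≃ Fin (Fintype.card V), ∃ L : List (Stage G),
    L.length = t ∧ IsSortingNetwork G π L}

/-- A matching step: an involution of the vertices moving pebbles only along edges. -/
def IsMatchingStep (G : SimpleGraph V) (σ : Equiv.Perm V) : Prop :=
  (∀ v, σ (σ v) = v) ∧ ∀ v, σ v ≠ v → G.Adj v (σ v)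

/-- Position of a pebble starting at `v` after applying the matching steps in `L`. -/
def finalPos (L : List (Equiv.Perm V)) (v : V) : V :=
  L.foldl (fun p σ => σ p) v

/-- `t` matching steps of `G` suffice to route every pebble from `v` to `σ v`. -/
def RoutesIn (G : SimpleGraph V) (σ : Equiv.Perm V) (t : ℕ) : Prop :=
  ∃ L : List (Equiv.Perm V), L.length = t ∧ (∀ τ ∈ L, IsMatchingStep G τ) ∧
    ∀ v, finalPos L v = σ v

/-- Routing time of the permutation `σ` on `G`. -/
noncomputable def rtP (G : SimpleGraph V) (σ : Equiv.Perm V) : ℕ :=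
  sInf {t | RoutesIn G σ t}

/-- The routing number of `G`. -/
noncomputable def rt [Fintype V] [DecidableEq V] (G : SimpleGraph V) : ℕ :=
  Finset.univ.sup fun σ : Equiv.Perm V => rtP G σ

/-- The complete `p`-partite graph with parts of size `m`:
two vertices are adjacent iff they lie in different parts. -/
def multipartite (p m : ℕ) : SimpleGraph (Fin p × Fin m) :=
  (⊤ : SimpleGraph (Fin p)).comap Prod.fst

namespace RT14
open Equiv Finset

variable {β : Type*}

def Invol (f : Equiv.Perm β) : Prop := ∀ v, f (f v) = v

/-- A good finite set of ordered pairs: all coordinates pairwise distinct. -/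
def GoodPairs (S : Finset (β × β)) : Prop :=
  (∀ q ∈ S, q.1 ≠ q.2) ∧
  ∀ q ∈ S, ∀ q' ∈ S, q ≠ q' → q.1 ≠ q'.1 ∧ q.1 ≠ q'.2 ∧ q.2 ≠ q'.1 ∧ q.2 ≠ q'.2

def IsCoord (S : Finset (β × β)) (v : β) : Prop :=
  (∃ q ∈ S, q.1 = v) ∨ ∃ q ∈ S, q.2 = v

open scoped Classical in
noncomputable def swapFn (S : Finset (β × β)) (v : β) : β :=
  if h1 : ∃ q ∈ S, q.1 = v then h1.choose.2
  else if h2 : ∃ q ∈ S, q.2 = v then h2.choose.1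
  else v

theorem swapFn_fst {S : Finset (β × β)} (hS : GoodPairs S) {q : β × β} (hq : q ∈ S) :
    swapFn S q.1 = q.2 := by
  classical
  have h1 : ∃ r ∈ S, r.1 = q.1 := ⟨q, hq, rfl⟩
  rw [swapFn, dif_pos h1]
  obtain ⟨hmem, heq⟩ := h1.choose_spec
  by_cases hqq : h1.choose = q
  · rw [hqq]
  · exact absurd heq (hS.2 _ hmem _ hq hqq).1

theorem swapFn_snd {S : Finset (β × β)} (hS : GoodPairs S) {q : β × β} (hq : q ∈ S) :
    swapFn S q.2 = q.1 := by
  classical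
  have h1 : ¬ ∃ r ∈ S, r.1 = q.2 := by
    rintro ⟨r, hr, h⟩
    by_cases hrq : r = q
    · exact hS.1 q hq (hrq ▸ h)
    · exact (hS.2 r hr q hq hrq).2.1 h
  have h2 : ∃ r ∈ S, r.2 = q.2 := ⟨q, hq, rfl⟩
  rw [swapFn, dif_neg h1, dif_pos h2]
  obtain ⟨hmem, heq⟩ := h2.choose_spec
  by_cases hqq : h2.choose = q
  · rw [hqq]
  · exact absurd heq (hS.2 _ hmem _ hq hqq).2.2.2

theorem swapFn_not_coord {S : Finset (β × β)} {v : β} (h : ¬ IsCoord S v) :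
    swapFn S v = v := by
  classical
  rw [swapFn, dif_neg (fun h1 => h (Or.inl h1)), dif_neg (fun h2 => h (Or.inr h2))]

theorem swapFn_invol {S : Finset (β × β)} (hS : GoodPairs S) :
    Function.Involutive (swapFn S) := by
  intro v
  by_cases h1 : ∃ q ∈ S, q.1 = v
  · obtain ⟨q, hq, h⟩ := h1
    subst h
    rw [swapFn_fst hS hq, swapFn_snd hS hq]
  · by_cases h2 : ∃ q ∈ S, q.2 = v
    · obtain ⟨q, hq, h⟩ := h2
      subst h
      rw [swapFn_snd hS hq, swapFn_fst hS hq]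
    · rw [swapFn_not_coord (fun h => h.elim h1 h2), swapFn_not_coord (fun h => h.elim h1 h2)]

theorem swapFn_coord_cases {S : Finset (β × β)} (hS : GoodPairs S) {v : β} (h : IsCoord S v) :
    ∃ q ∈ S, (q.1 = v ∧ swapFn S v = q.2) ∨ (q.2 = v ∧ swapFn S v = q.1) := by
  rcases h with ⟨q, hq, h⟩ | ⟨q, hq, h⟩
  · exact ⟨q, hq, Or.inl ⟨h, h ▸ swapFn_fst hS hq⟩⟩
  · exact ⟨q, hq, Or.inr ⟨h, h ▸ swapFn_snd hS hq⟩⟩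

noncomputable def swapPerm (S : Finset (β × β)) (hS : GoodPairs S) : Equiv.Perm β :=
  Function.Involutive.toPerm _ (swapFn_invol hS)

@[simp] theorem swapPerm_apply {S : Finset (β × β)} (hS : GoodPairs S) (v : β) :
    swapPerm S hS v = swapFn S v := rfl

theorem swapPerm_invol {S : Finset (β × β)} (hS : GoodPairs S) : Invol (swapPerm S hS) :=
  fun v => swapFn_invol hS v

theorem swapFn_ne_imp {S : Finset (β × β)} {v : β} :
    swapFn S v ≠ v → IsCoord S v := by
  intro h
  by_contra hc
  exact h (swapFn_not_coord hc)

end RT14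

/-! ## Two involutions -/

namespace RT14
open Equiv Equiv.Perm Finset

variable {β : Type*} [Fintype β] [DecidableEq β]

noncomputable def revA (l : List β) : β → β := fun v =>
  if h : v ∈ l then l[l.length - 1 - List.idxOf v l]'(by
    have := List.idxOf_lt_length_iff.2 h; omega) else v

noncomputable def revB (l : List β) : β → β := fun v =>
  if h : v ∈ l then l[(l.length - List.idxOf v l) % l.length]'(by
    have := List.idxOf_lt_length_iff.2 h
    exact Nat.mod_lt _ (by omega)) else v

omit [Fintype β] in
theorem revA_getElem {l : List β} (hnd : l.Nodup) {i : ℕ} (hi : i < l.length) :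
    revA l l[i] = l[l.length - 1 - i]'(by omega) := by
  rw [revA]
  rw [dif_pos (List.getElem_mem hi)]
  simp_rw [List.Nodup.idxOf_getElem hnd i hi]

omit [Fintype β] in
theorem revB_getElem {l : List β} (hnd : l.Nodup) {i : ℕ} (hi : i < l.length) :
    revB l l[i] = l[(l.length - i) % l.length]'(Nat.mod_lt _ (by omega)) := by
  rw [revB]
  rw [dif_pos (List.getElem_mem hi)]
  simp_rw [List.Nodup.idxOf_getElem hnd i hi]

omit [Fintype β] in
theorem revA_not_mem {l : List β} {v : β} (h : v ∉ l) : revA l v = v := by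
  rw [revA]; exact dif_neg h

omit [Fintype β] in
theorem revB_not_mem {l : List β} {v : β} (h : v ∉ l) : revB l v = v := by
  rw [revB]; exact dif_neg h

omit [Fintype β] in
theorem revA_invol {l : List β} (hnd : l.Nodup) : Function.Involutive (revA l) := by
  intro v
  by_cases h : v ∈ l
  · have hi := List.idxOf_lt_length_iff.2 h
    have hv : l[List.idxOf v l] = v := List.getElem_idxOf hi
    conv_lhs => rw [← hv]
    rw [revA_getElem hnd hi, revA_getElem hnd (by omega)]
    have heq : l.length - 1 - (l.length - 1 - List.idxOf v l) = List.idxOf v l := by omega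
    simp_rw [heq]
    exact hv
  · rw [revA_not_mem h, revA_not_mem h]

omit [Fintype β] in
theorem revB_invol {l : List β} (hnd : l.Nodup) : Function.Involutive (revB l) := by
  intro v
  by_cases h : v ∈ l
  · have hi := List.idxOf_lt_length_iff.2 h
    have hv : l[List.idxOf v l] = v := List.getElem_idxOf hi
    conv_lhs => rw [← hv]
    rw [revB_getElem hnd hi, revB_getElem hnd (Nat.mod_lt _ (by omega))]
    have heq : (l.length - (l.length - List.idxOf v l) % l.length) % l.length
        = List.idxOf v l := by
      rcases Nat.eq_zero_or_pos (List.idxOf v l) with h0 | h0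
      · rw [h0]; simp
      · have h1 : (l.length - List.idxOf v l) % l.length = l.length - List.idxOf v l :=
          Nat.mod_eq_of_lt (by omega)
        rw [h1]
        have h2 : l.length - (l.length - List.idxOf v l) = List.idxOf v l := by omega
        rw [h2]
        exact Nat.mod_eq_of_lt hi
    simp_rw [heq]
    exact hv
  · rw [revB_not_mem h, revB_not_mem h]

omit [Fintype β] in
theorem revB_revA {l : List β} (hnd : l.Nodup) (v : β) :
    revB l (revA l v) = l.formPerm v := by
  by_cases h : v ∈ l
  · have hi := List.idxOf_lt_length_iff.2 h
    have hv : l[List.idxOf v l] = v := List.getElem_idxOf hi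
    conv_lhs => rw [← hv]
    conv_rhs => rw [← hv]
    rw [revA_getElem hnd hi, revB_getElem hnd (by omega),
      List.formPerm_apply_getElem l hnd _ hi]
    congr 1
    have heq : l.length - (l.length - 1 - List.idxOf v l) = List.idxOf v l + 1 := by omega
    rw [heq]
  · rw [revA_not_mem h, revB_not_mem h, List.formPerm_apply_of_notMem h]

/-- every permutation of a finite type is a product of two involutions,
    supported inside its support -/
theorem exists_two_invol (σ : Equiv.Perm β) :
    ∃ a b : Equiv.Perm β, Invol a ∧ Invol b ∧ σ = a * b ∧
      (∀ v, a v ≠ v → σ v ≠ v) ∧ (∀ v, b v ≠ v → σ v ≠ v) := by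
  induction σ using Equiv.Perm.cycle_induction_on with
  | base_one =>
    refine ⟨1, 1, fun v => rfl, fun v => rfl, by simp, ?_, ?_⟩ <;>
      · intro v hv; simp at hv
  | base_cycles σ hσ =>
    obtain ⟨x, hx, -⟩ := id hσ
    classical
    set l := σ.toList x with hl
    have hnd : l.Nodup := Equiv.Perm.nodup_toList σ x
    have hform : l.formPerm = σ := by
      rw [hl, Equiv.Perm.formPerm_toList, hσ.cycleOf_eq hx]
    have hlen : 2 ≤ l.length := by
      rw [hl, Equiv.Perm.length_toList, hσ.cycleOf_eq hx]
      exact hσ.two_le_card_support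
    have hsupp : ∀ v, v ∈ l → σ v ≠ v := by
      intro v hv
      have hsup : l.formPerm.support = l.toFinset := List.support_formPerm_of_nodup l hnd (by
        intro y hy
        rw [hy] at hlen
        simp at hlen)
      have hv' : v ∈ l.formPerm.support := by
        rw [hsup]; simpa using hv
      rw [hform] at hv'
      exact Equiv.Perm.mem_support.1 hv'
    refine ⟨Function.Involutive.toPerm _ (revB_invol hnd),
      Function.Involutive.toPerm _ (revA_invol hnd),
      fun v => revB_invol hnd v, fun v => revA_invol hnd v, ?_, ?_, ?_⟩
    · ext v
      show σ v = revB l (revA l v)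
      rw [revB_revA hnd v, hform]
    · intro v hv
      apply hsupp
      by_contra h
      exact hv (revB_not_mem h)
    · intro v hv
      apply hsupp
      by_contra h
      exact hv (revA_not_mem h)
  | induction_disjoint σ τ hd hc h1 h2 =>
    obtain ⟨a1, b1, ha1, hb1, he1, hs1a, hs1b⟩ := h1
    obtain ⟨a2, b2, ha2, hb2, he2, hs2a, hs2b⟩ := h2
    have hab : ∀ (f g : Equiv.Perm β), (∀ v, f v ≠ v → σ v ≠ v) → (∀ v, g v ≠ v → τ v ≠ v) →
        Equiv.Perm.Disjoint f g := by
      intro f g hf hg v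
      rcases hd v with h | h
      · left; by_contra hne; exact hf v hne h
      · right; by_contra hne; exact hg v hne h
    have hca : Commute a1 a2 := (hab a1 a2 hs1a hs2a).commute
    have hcb : Commute b1 b2 := (hab b1 b2 hs1b hs2b).commute
    have hcmid : Commute a2 b1 := ((hab b1 a2 hs1b hs2a).symm).commute
    have hmulsup : ∀ v, σ v ≠ v ∨ τ v ≠ v → (σ * τ) v ≠ v := by
      intro v hv
      have : v ∈ (σ * τ).support := by
        rw [hd.support_mul, Finset.mem_union, Equiv.Perm.mem_support, Equiv.Perm.mem_support]
        exact hv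
      exact Equiv.Perm.mem_support.1 this
    refine ⟨a1 * a2, b1 * b2, ?_, ?_, ?_, ?_, ?_⟩
    · intro v
      have key : (a1 * a2) * (a1 * a2) = 1 := by
        rw [show (a1 * a2) * (a1 * a2) = (a1 * a1) * (a2 * a2) by
          rw [mul_assoc, ← mul_assoc a2, ← hca.eq, mul_assoc, ← mul_assoc]]
        have e1 : a1 * a1 = 1 := Equiv.ext fun v => ha1 v
        have e2 : a2 * a2 = 1 := Equiv.ext fun v => ha2 v
        rw [e1, e2, one_mul]
      calc (a1 * a2) ((a1 * a2) v) = ((a1 * a2) * (a1 * a2)) v := rfl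
        _ = v := by rw [key]; rfl
    · intro v
      have key : (b1 * b2) * (b1 * b2) = 1 := by
        rw [show (b1 * b2) * (b1 * b2) = (b1 * b1) * (b2 * b2) by
          rw [mul_assoc, ← mul_assoc b2, ← hcb.eq, mul_assoc, ← mul_assoc]]
        have e1 : b1 * b1 = 1 := Equiv.ext fun v => hb1 v
        have e2 : b2 * b2 = 1 := Equiv.ext fun v => hb2 v
        rw [e1, e2, one_mul]
      calc (b1 * b2) ((b1 * b2) v) = ((b1 * b2) * (b1 * b2)) v := rfl
        _ = v := by rw [key]; rfl
    · rw [he1, he2, mul_assoc a1 b1, ← mul_assoc b1 a2, ← hcmid.eq, mul_assoc a2 b1, ← mul_assoc a1 a2]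
    · intro v hv
      apply hmulsup
      by_cases h : a2 v = v
      · left
        apply hs1a
        intro h1
        apply hv
        show a1 (a2 v) = v
        rw [h, h1]
      · right; exact hs2a v h
    · intro v hv
      apply hmulsup
      by_cases h : b2 v = v
      · left
        apply hs1b
        intro h1
        apply hv
        show b1 (b2 v) = v
        rw [h, h1]
      · right; exact hs2b v h

end RT14

/-! ## Pairing lemma -/

namespace RT14
open Equiv Finset

variable {p m : ℕ}

theorem exists_pairing (R : Finset (Fin p × Fin m))
    (hbal : ∀ i : Fin p, 2 * (R.filter (fun v => v.1 = i)).card ≤ R.card)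
    (heven : Even R.card) :
    ∃ M : Finset ((Fin p × Fin m) × (Fin p × Fin m)),
      (∀ q ∈ M, q.1 ∈ R ∧ q.2 ∈ R ∧ q.1.1 ≠ q.2.1) ∧
      GoodPairs M ∧
      (∀ v ∈ R, IsCoord M v) ∧
      2 * M.card = R.card := by
  classical
  obtain ⟨n, hn⟩ : ∃ n, R.card = n := ⟨_, rfl⟩
  induction n using Nat.strong_induction_on generalizing R with
  | _ n ih =>
  rcases Nat.eq_zero_or_pos n with h0 | hpos
  · subst h0
    have hR : R = ∅ := Finset.card_eq_zero.1 hn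
    subst hR
    refine ⟨∅, by simp, ⟨by simp, by simp⟩, by simp, by simp⟩
  · -- R nonempty
    have hRne : R.Nonempty := Finset.card_pos.1 (hn ▸ hpos)
    obtain ⟨v0, hv0⟩ := hRne
    set c : Fin p → ℕ := fun j => (R.filter (fun v => v.1 = j)).card with hc
    have hNEp : (Finset.univ : Finset (Fin p)).Nonempty := ⟨v0.1, Finset.mem_univ _⟩
    obtain ⟨i1, -, hmax⟩ := Finset.exists_max_image Finset.univ c hNEp
    have hci1 : 1 ≤ c i1 := by
      have : v0 ∈ R.filter (fun v => v.1 = v0.1) := by simp [hv0]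
      have h1 : 1 ≤ c v0.1 := Finset.card_pos.2 ⟨v0, this⟩
      exact le_trans h1 (hmax _ (Finset.mem_univ _))
    obtain ⟨u, hu⟩ := Finset.card_pos.1 hci1
    have huR : u ∈ R := (Finset.mem_filter.1 hu).1
    have hu1 : u.1 = i1 := (Finset.mem_filter.1 hu).2
    -- a second part exists
    have hR2ne : (R.filter (fun v => v.1 ≠ i1)).Nonempty := by
      by_contra hcon
      rw [Finset.not_nonempty_iff_eq_empty] at hcon
      have : R.filter (fun v => v.1 = i1) = R := by
        ext x
        simp only [Finset.mem_filter, and_iff_left_iff_imp]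
        intro hx
        by_contra hne
        have : x ∈ R.filter (fun v => v.1 ≠ i1) := by simp [hx, hne]
        simp [hcon] at this
      have h2 := hbal i1
      rw [this] at h2
      omega
    obtain ⟨w, hw⟩ := hR2ne
    have hwR : w ∈ R := (Finset.mem_filter.1 hw).1
    have hw1 : w.1 ≠ i1 := (Finset.mem_filter.1 hw).2
    obtain ⟨i2, hi2mem, hmax2⟩ := Finset.exists_max_image (Finset.univ.filter (fun j => j ≠ i1)) c
      ⟨w.1, by simp [hw1]⟩
    have hi2 : i2 ≠ i1 := (Finset.mem_filter.1 hi2mem).2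
    have hci2 : 1 ≤ c i2 := by
      have : w ∈ R.filter (fun v => v.1 = w.1) := by simp [hwR]
      have h1 : 1 ≤ c w.1 := Finset.card_pos.2 ⟨w, this⟩
      exact le_trans h1 (hmax2 _ (Finset.mem_filter.2 ⟨Finset.mem_univ _, hw1⟩))
    obtain ⟨v, hv⟩ := Finset.card_pos.1 hci2
    have hvR : v ∈ R := (Finset.mem_filter.1 hv).1
    have hv1 : v.1 = i2 := (Finset.mem_filter.1 hv).2
    have huv : u ≠ v := by
      intro h
      rw [h, hv1] at hu1
      exact hi2 hu1
    set R' := (R.erase u).erase v with hR'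
    have hvR' : v ∈ R.erase u := Finset.mem_erase.2 ⟨fun h => huv h.symm, hvR⟩
    have hcard' : R'.card = n - 2 := by
      rw [hR', Finset.card_erase_of_mem hvR', Finset.card_erase_of_mem huR, hn]
      omega
    have hsub' : R' ⊆ R := (Finset.erase_subset _ _).trans (Finset.erase_subset _ _)
    have hmemR' : ∀ x, x ∈ R' ↔ (x ∈ R ∧ x ≠ u ∧ x ≠ v) := by
      intro x
      rw [hR']
      simp only [Finset.mem_erase]
      tauto
    have hn2 : 2 ≤ n := by
      rcases heven with ⟨k, hk⟩
      rw [hn] at hk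
      omega
    -- balance for R'
    have hbal' : ∀ j : Fin p, 2 * (R'.filter (fun v => v.1 = j)).card ≤ R'.card := by
      intro j
      rw [hcard']
      by_cases hj1 : j = i1
      · have hss : R'.filter (fun v => v.1 = j) ⊆ (R.filter (fun v => v.1 = j)).erase u := by
          intro x hx
          rw [Finset.mem_filter, hmemR'] at hx
          rw [Finset.mem_erase, Finset.mem_filter]
          tauto
        have h2 := Finset.card_le_card hss
        rw [Finset.card_erase_of_mem (by simp [huR, hu1, hj1])] at h2
        have h3 := hbal j
        rw [hn] at h3
        omega
      · by_cases hj2 : j = i2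
        · have hss : R'.filter (fun v => v.1 = j) ⊆ (R.filter (fun v => v.1 = j)).erase v := by
            intro x hx
            rw [Finset.mem_filter, hmemR'] at hx
            rw [Finset.mem_erase, Finset.mem_filter]
            tauto
          have h2 := Finset.card_le_card hss
          rw [Finset.card_erase_of_mem (by simp [hvR, hv1, hj2])] at h2
          have h3 := hbal j
          rw [hn] at h3
          omega
        · -- j distinct from i1 i2 : the three filters are disjoint
          have hsubf : R'.filter (fun v => v.1 = j) ⊆ R.filter (fun v => v.1 = j) := by
            intro x hx
            rw [Finset.mem_filter, hmemR'] at hx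
            rw [Finset.mem_filter]
            tauto
          have h2 := Finset.card_le_card hsubf
          have d12 : Disjoint (R.filter (fun v => v.1 = i1)) (R.filter (fun v => v.1 = i2)) := by
            rw [Finset.disjoint_left]
            intro x hx1 hx2
            rw [Finset.mem_filter] at hx1 hx2
            exact hi2 (hx2.2.symm.trans hx1.2)
          have d123 : Disjoint (R.filter (fun v => v.1 = i1) ∪ R.filter (fun v => v.1 = i2))
              (R.filter (fun v => v.1 = j)) := by
            rw [Finset.disjoint_left]
            intro x hx1 hx3
            rw [Finset.mem_filter] at hx3
            rcases Finset.mem_union.1 hx1 with hx | hx <;> rw [Finset.mem_filter] at hx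
            · exact hj1 (hx3.2.symm.trans hx.2)
            · exact hj2 (hx3.2.symm.trans hx.2)
          have hsum : (R.filter (fun v => v.1 = i1)).card + (R.filter (fun v => v.1 = i2)).card
              + (R.filter (fun v => v.1 = j)).card ≤ R.card := by
            rw [← Finset.card_union_of_disjoint d12, ← Finset.card_union_of_disjoint d123]
            apply Finset.card_le_card
            intro x hx
            rcases Finset.mem_union.1 hx with hx | hx
            · rcases Finset.mem_union.1 hx with hx | hx <;> exact (Finset.mem_filter.1 hx).1
            · exact (Finset.mem_filter.1 hx).1
          have hm1 : c j ≤ c i1 := hmax j (Finset.mem_univ _)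
          have hm2 : c j ≤ c i2 := hmax2 j (Finset.mem_filter.2 ⟨Finset.mem_univ _, hj1⟩)
          have hev : n % 2 = 0 := by
            rcases heven with ⟨k, hk⟩
            rw [hn] at hk
            omega
          rw [hn] at hsum
          simp only [hc] at hm1 hm2
          omega
    have heven' : Even R'.card := by
      rw [hcard']
      rcases heven with ⟨k, hk⟩
      rw [hn] at hk
      exact ⟨k - 1, by omega⟩
    obtain ⟨M', hmem', hgood', hcover', hcard2'⟩ :=
      ih (n - 2) (by omega) R' hbal' heven' hcard'
    -- add the pair (u, v)
    have hnotuv : ∀ q ∈ M', q.1 ≠ u ∧ q.1 ≠ v ∧ q.2 ≠ u ∧ q.2 ≠ v := by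
      intro q hq
      obtain ⟨h1, h2, -⟩ := hmem' q hq
      rw [hmemR'] at h1 h2
      tauto
    have hnew : (u, v) ∉ M' := by
      intro h
      exact (hnotuv _ h).1 rfl
    refine ⟨insert (u, v) M', ?_, ⟨?_, ?_⟩, ?_, ?_⟩
    · intro q hq
      rcases Finset.mem_insert.1 hq with h | h
      · subst h
        exact ⟨huR, hvR, by rw [hu1, hv1]; exact fun h => hi2 h.symm⟩
      · obtain ⟨h1, h2, h3⟩ := hmem' q h
        exact ⟨hsub' h1, hsub' h2, h3⟩
    · intro q hq
      rcases Finset.mem_insert.1 hq with h | h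
      · subst h; exact huv
      · exact hgood'.1 q h
    · intro q hq q' hq' hne
      rcases Finset.mem_insert.1 hq with h | h <;> rcases Finset.mem_insert.1 hq' with h' | h'
      · exact absurd (h.trans h'.symm) hne
      · subst h
        have := hnotuv q' h'
        simp only [ne_eq]
        refine ⟨fun hh => this.1 hh.symm, fun hh => this.2.2.1 hh.symm,
          fun hh => this.2.1 hh.symm, fun hh => this.2.2.2 hh.symm⟩
      · subst h'
        have := hnotuv q h
        exact ⟨this.1, this.2.1, this.2.2.1, this.2.2.2⟩
      · exact hgood'.2 q h q' h' hne
    · intro x hx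
      by_cases hxu : x = u
      · exact Or.inl ⟨(u, v), Finset.mem_insert_self _ _, hxu.symm⟩
      · by_cases hxv : x = v
        · exact Or.inr ⟨(u, v), Finset.mem_insert_self _ _, hxv.symm⟩
        · have hx' : x ∈ R' := by rw [hmemR']; exact ⟨hx, hxu, hxv⟩
          rcases hcover' x hx' with ⟨q, hq, hh⟩ | ⟨q, hq, hh⟩
          · exact Or.inl ⟨q, Finset.mem_insert_of_mem hq, hh⟩
          · exact Or.inr ⟨q, Finset.mem_insert_of_mem hq, hh⟩
    · rw [Finset.card_insert_of_notMem hnew, hn]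
      omega

/-! ## Separation master lemma -/

theorem swapFn_part_ne {S : Finset ((Fin p × Fin m) × (Fin p × Fin m))} (hS : GoodPairs S)
    (hcross : ∀ q ∈ S, q.1.1 ≠ q.2.1) {v : Fin p × Fin m} (h : IsCoord S v) :
    (swapFn S v).1 ≠ v.1 := by
  obtain ⟨q, hq, hh⟩ := swapFn_coord_cases hS h
  rcases hh with ⟨h1, h2⟩ | ⟨h1, h2⟩
  · rw [h2, ← h1]
    exact (hcross q hq).symm
  · rw [h2, ← h1]
    exact hcross q hq

theorem sep_master (τ : Equiv.Perm (Fin p × Fin m)) (hτ : Invol τ)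
    (S : Finset ((Fin p × Fin m) × (Fin p × Fin m))) (hS : GoodPairs S)
    (hcross : ∀ q ∈ S, q.1.1 ≠ q.2.1)
    (P1 : ∀ u, τ u ≠ u → (τ u).1 = u.1 → IsCoord S u ∨ IsCoord S (τ u))
    (P2 : ∀ u, τ u ≠ u → IsCoord S u → IsCoord S (τ u) →
      (swapFn S u).1 ≠ (swapFn S (τ u)).1)
    (P3 : ∀ u, τ u ≠ u → (τ u).1 ≠ u.1 → IsCoord S u → ¬ IsCoord S (τ u) →
      (swapFn S u).1 ≠ (τ u).1) :
    ∀ u, τ u ≠ u → (swapFn S (τ u)).1 ≠ (swapFn S u).1 := by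
  intro u hu
  have hu' : τ (τ u) ≠ τ u := by
    rw [hτ u]
    exact fun h => hu h.symm
  by_cases cu : IsCoord S u <;> by_cases ct : IsCoord S (τ u)
  · exact (P2 u hu cu ct).symm
  · rw [swapFn_not_coord ct]
    by_cases hw : (τ u).1 = u.1
    · rw [hw]
      exact fun h => (swapFn_part_ne hS hcross cu) h.symm
    · exact fun h => (P3 u hu hw cu ct) h.symm
  · rw [swapFn_not_coord cu]
    by_cases hw : (τ u).1 = u.1
    · rw [← hw]
      exact swapFn_part_ne hS hcross ct
    · have h3 := P3 (τ u) hu' (by rw [hτ u]; exact fun h => hw h.symm) ct (by rw [hτ u]; exact cu)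
      rw [hτ u] at h3
      exact h3
  · by_cases hw : (τ u).1 = u.1
    · rcases P1 u hu hw with h | h
      · exact absurd h cu
      · exact absurd h ct
    · rw [swapFn_not_coord cu, swapFn_not_coord ct]
      exact hw

/-! ## Representatives of within-part pairs -/

variable (τ : Equiv.Perm (Fin p × Fin m))

def Reps : Finset (Fin p × Fin m) :=
  Finset.univ.filter (fun v => τ v ≠ v ∧ (τ v).1 = v.1 ∧ v.2 < (τ v).2)

theorem mem_reps {v : Fin p × Fin m} :
    v ∈ Reps τ ↔ τ v ≠ v ∧ (τ v).1 = v.1 ∧ v.2 < (τ v).2 := by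
  simp [Reps]

theorem rep_or (hτ : Invol τ) {u : Fin p × Fin m} (hu : τ u ≠ u) (hw : (τ u).1 = u.1) :
    u ∈ Reps τ ∨ τ u ∈ Reps τ := by
  have hne : u.2 ≠ (τ u).2 := by
    intro h
    exact hu (Prod.ext hw (h.symm))
  rcases lt_or_gt_of_ne hne with h | h
  · exact Or.inl ((mem_reps τ).2 ⟨hu, hw, h⟩)
  · refine Or.inr ((mem_reps τ).2 ⟨?_, ?_, ?_⟩)
    · rw [hτ u]
      exact fun hh => hu hh.symm
    · rw [hτ u, hw]
    · rw [hτ u]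
      exact h

theorem tau_rep_not_rep (hτ : Invol τ) {u : Fin p × Fin m} (hu : u ∈ Reps τ) :
    τ u ∉ Reps τ := by
  rw [mem_reps] at hu
  rw [mem_reps, hτ u]
  rintro ⟨-, -, h⟩
  exact absurd (hu.2.2.trans h) (lt_irrefl _)

theorem rep_within (hτ : Invol τ) {u : Fin p × Fin m} (hu : u ∈ Reps τ) :
    τ u ≠ u ∧ (τ u).1 = u.1 := ((mem_reps τ).1 hu).imp id And.left

end RT14

/-! ## Counting lemmas -/

namespace RT14
open Equiv Finset

variable {p m : ℕ}

theorem card_split {α : Type*} [Fintype α] (P Q : α → Prop)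
    [DecidablePred P] [DecidablePred Q] [∀ a, Decidable (P a ∧ Q a)]
    [∀ a, Decidable (P a ∧ ¬ Q a)] :
    (Finset.univ.filter (fun v => P v ∧ Q v)).card
      + (Finset.univ.filter (fun v => P v ∧ ¬ Q v)).card
      = (Finset.univ.filter P).card := by
  classical
  have h1 : Finset.univ.filter (fun v => P v ∧ Q v) = (Finset.univ.filter P).filter Q := by
    ext x
    simp only [Finset.mem_filter, Finset.mem_univ, true_and]
  have h2 : Finset.univ.filter (fun v => P v ∧ ¬ Q v)
      = (Finset.univ.filter P).filter (fun v => ¬ Q v) := by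
    ext x
    simp only [Finset.mem_filter, Finset.mem_univ, true_and]
  rw [h1, h2]
  exact Finset.card_filter_add_card_filter_not Q

theorem card_part (i : Fin p) :
    (Finset.univ.filter (fun v : Fin p × Fin m => v.1 = i)).card = m := by
  have he : Finset.univ.filter (fun v : Fin p × Fin m => v.1 = i)
      = ({i} : Finset (Fin p)) ×ˢ (Finset.univ : Finset (Fin m)) := by
    ext x
    rw [Finset.mem_filter, Finset.mem_product]
    simp
  rw [he, Finset.card_product]
  simp

theorem card_part_split (i : Fin p) :
    (Finset.univ.filter (fun v : Fin p × Fin m => v.1 = i)).card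
      + (Finset.univ.filter (fun v : Fin p × Fin m => ¬ v.1 = i)).card = p * m := by
  classical
  rw [Finset.card_filter_add_card_filter_not (fun v : Fin p × Fin m => v.1 = i)]
  simp [Fintype.card_prod]

variable (τ : Equiv.Perm (Fin p × Fin m))

theorem within_double (hτ : Invol τ) (φ : Fin p → Prop) [DecidablePred φ] :
    (Finset.univ.filter (fun v : Fin p × Fin m => (φ v.1 ∧ ¬ τ v = v) ∧ (τ v).1 = v.1)).card
      = 2 * ((Reps τ).filter (fun v => φ v.1)).card := by
  classical
  set Rφ := (Reps τ).filter (fun v => φ v.1) with hRφ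
  have hsplit : Finset.univ.filter (fun v : Fin p × Fin m => (φ v.1 ∧ ¬ τ v = v) ∧ (τ v).1 = v.1)
      = Rφ ∪ Rφ.image τ := by
    ext x
    simp only [Finset.mem_filter, Finset.mem_univ, true_and, Finset.mem_union, Finset.mem_image,
      hRφ, mem_reps]
    constructor
    · rintro ⟨⟨hφ, hmv⟩, hwit⟩
      rcases rep_or τ hτ hmv hwit with h | h
      · exact Or.inl ⟨(mem_reps τ).1 h, hφ⟩
      · refine Or.inr ⟨τ x, ⟨(mem_reps τ).1 h, ?_⟩, hτ x⟩
        rw [hwit]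
        exact hφ
    · rintro (⟨⟨h1, h2, h3⟩, hφ⟩ | ⟨y, ⟨⟨h1, h2, h3⟩, hφ⟩, rfl⟩)
      · exact ⟨⟨hφ, h1⟩, h2⟩
      · refine ⟨⟨?_, ?_⟩, ?_⟩
        · rw [h2]; exact hφ
        · rw [hτ y]; exact fun h => h1 h.symm
        · rw [hτ y, h2]
  have hdisj : Disjoint Rφ (Rφ.image τ) := by
    rw [Finset.disjoint_left]
    rintro x hx1 hx2
    rw [Finset.mem_image] at hx2
    obtain ⟨y, hy, rfl⟩ := hx2
    rw [hRφ, Finset.mem_filter] at hx1 hy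
    exact tau_rep_not_rep τ hτ hy.1 hx1.1
  rw [hsplit, Finset.card_union_of_disjoint hdisj,
    Finset.card_image_of_injective _ τ.injective]
  omega

theorem cross_far_double (hτ : Invol τ) (i : Fin p) :
    (Finset.univ.filter (fun v : Fin p × Fin m =>
        ((¬ v.1 = i ∧ ¬ τ v = v) ∧ ¬ (τ v).1 = v.1) ∧ ¬ (τ v).1 = i)).card
      = 2 * (Finset.univ.filter (fun v : Fin p × Fin m =>
          (((¬ v.1 = i ∧ ¬ τ v = v) ∧ ¬ (τ v).1 = v.1) ∧ ¬ (τ v).1 = i)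
            ∧ v.1 < (τ v).1)).card := by
  classical
  set CR := Finset.univ.filter (fun v : Fin p × Fin m =>
    (((¬ v.1 = i ∧ ¬ τ v = v) ∧ ¬ (τ v).1 = v.1) ∧ ¬ (τ v).1 = i) ∧ v.1 < (τ v).1) with hCR
  have hsplit : Finset.univ.filter (fun v : Fin p × Fin m =>
      ((¬ v.1 = i ∧ ¬ τ v = v) ∧ ¬ (τ v).1 = v.1) ∧ ¬ (τ v).1 = i) = CR ∪ CR.image τ := by
    ext x
    simp only [Finset.mem_filter, Finset.mem_univ, true_and, Finset.mem_union, Finset.mem_image,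
      hCR]
    constructor
    · rintro ⟨⟨⟨h1, h2⟩, h3⟩, h4⟩
      rcases lt_or_gt_of_ne (fun h : x.1 = (τ x).1 => h3 h.symm) with h | h
      · exact Or.inl ⟨⟨⟨⟨h1, h2⟩, h3⟩, h4⟩, h⟩
      · refine Or.inr ⟨τ x, ⟨⟨⟨⟨h4, ?_⟩, ?_⟩, ?_⟩, ?_⟩, hτ x⟩
        · rw [hτ x]; exact fun hh => h2 hh.symm
        · rw [hτ x]; exact fun hh => h3 hh.symm
        · rw [hτ x]; exact h1
        · rw [hτ x]; exact h
    · rintro (⟨⟨⟨⟨h1, h2⟩, h3⟩, h4⟩, h5⟩ | ⟨y, ⟨⟨⟨⟨h1, h2⟩, h3⟩, h4⟩, h5⟩, rfl⟩)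
      · exact ⟨⟨⟨h1, h2⟩, h3⟩, h4⟩
      · refine ⟨⟨⟨h4, ?_⟩, ?_⟩, ?_⟩
        · rw [hτ y]; exact fun hh => h2 hh.symm
        · rw [hτ y]; exact fun hh => h3 hh.symm
        · rw [hτ y]; exact h1
  have hdisj : Disjoint CR (CR.image τ) := by
    rw [Finset.disjoint_left]
    rintro x hx1 hx2
    rw [Finset.mem_image] at hx2
    obtain ⟨y, hy, rfl⟩ := hx2
    rw [hCR, Finset.mem_filter] at hx1 hy
    have h1 := hx1.2.2
    have h2 := hy.2.2
    rw [hτ y] at h1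
    exact absurd (h2.trans h1) (lt_irrefl _)
  rw [hsplit, Finset.card_union_of_disjoint hdisj,
    Finset.card_image_of_injective _ τ.injective]
  omega

theorem cross_near_card (hτ : Invol τ) (i : Fin p) :
    (Finset.univ.filter (fun v : Fin p × Fin m =>
        ((¬ v.1 = i ∧ ¬ τ v = v) ∧ ¬ (τ v).1 = v.1) ∧ (τ v).1 = i)).card
      = (Finset.univ.filter (fun v : Fin p × Fin m =>
          (v.1 = i ∧ ¬ τ v = v) ∧ ¬ (τ v).1 = v.1)).card := by
  classical
  have hsplit : Finset.univ.filter (fun v : Fin p × Fin m =>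
      ((¬ v.1 = i ∧ ¬ τ v = v) ∧ ¬ (τ v).1 = v.1) ∧ (τ v).1 = i)
      = (Finset.univ.filter (fun v : Fin p × Fin m =>
          (v.1 = i ∧ ¬ τ v = v) ∧ ¬ (τ v).1 = v.1)).image τ := by
    ext x
    simp only [Finset.mem_filter, Finset.mem_univ, true_and, Finset.mem_image]
    constructor
    · rintro ⟨⟨⟨h1, h2⟩, h3⟩, h4⟩
      refine ⟨τ x, ⟨⟨h4, ?_⟩, ?_⟩, hτ x⟩
      · rw [hτ x]; exact fun hh => h2 hh.symm
      · rw [hτ x]; exact fun hh => h3 hh.symm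
    · rintro ⟨y, ⟨⟨h1, h2⟩, h3⟩, rfl⟩
      refine ⟨⟨⟨?_, ?_⟩, ?_⟩, ?_⟩
      · intro hh; exact h3 (hh.trans h1.symm)
      · rw [hτ y]; exact fun hh => h2 hh.symm
      · rw [hτ y]; exact fun hh => h3 hh.symm
      · rw [hτ y]; exact h1
  rw [hsplit, Finset.card_image_of_injective _ τ.injective]

end RT14

/-! ## The separating cross involution: three cases -/

namespace RT14
open Equiv Finset

variable {p m : ℕ} (τ : Equiv.Perm (Fin p × Fin m))

def SepConcl (S : Finset ((Fin p × Fin m) × (Fin p × Fin m))) : Prop :=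
  GoodPairs S ∧ (∀ q ∈ S, q.1.1 ≠ q.2.1) ∧
    ∀ u, τ u ≠ u → (swapFn S (τ u)).1 ≠ (swapFn S u).1

theorem sep_nomaj_even (hτ : Invol τ)
    (hbal : ∀ i : Fin p, 2 * ((Reps τ).filter (fun v => v.1 = i)).card ≤ (Reps τ).card)
    (heven : Even (Reps τ).card) :
    ∃ S, SepConcl τ S := by
  classical
  obtain ⟨M, hmem, hgood, hcover, -⟩ := exists_pairing (Reps τ) hbal heven
  have hcoordR : ∀ v, IsCoord M v → v ∈ Reps τ := by
    rintro v (⟨q, hq, rfl⟩ | ⟨q, hq, rfl⟩)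
    · exact (hmem q hq).1
    · exact (hmem q hq).2.1
  have hcross : ∀ q ∈ M, q.1.1 ≠ q.2.1 := fun q hq => (hmem q hq).2.2
  refine ⟨M, hgood, hcross, ?_⟩
  apply sep_master τ hτ M hgood hcross
  · intro u hu hw
    rcases rep_or τ hτ hu hw with h | h
    · exact Or.inl (hcover u h)
    · exact Or.inr (hcover _ h)
  · intro u hu cu ct
    exact absurd (hcoordR _ ct) (tau_rep_not_rep τ hτ (hcoordR _ cu))
  · intro u hu hcr cu _
    exact absurd ((mem_reps τ).1 (hcoordR _ cu)).2.1 hcr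

end RT14

namespace RT14
open Equiv Finset

variable {p m : ℕ} (τ : Equiv.Perm (Fin p × Fin m))

theorem sep_nomaj_odd (hτ : Invol τ)
    (hbal : ∀ i : Fin p, 2 * ((Reps τ).filter (fun v => v.1 = i)).card ≤ (Reps τ).card)
    (hodd : ¬ Even (Reps τ).card) :
    ∃ S, SepConcl τ S := by
  classical
  set R := Reps τ with hR
  have hodd' : R.card % 2 = 1 := Nat.odd_iff.1 (Nat.not_even_iff_odd.1 hodd)
  have hne : R.Nonempty := Finset.card_pos.1 (by omega)
  obtain ⟨u0, hu0⟩ := hne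
  set j := u0.1 with hj
  set R' := R.erase u0 with hR'
  have hcard' : R'.card = R.card - 1 := Finset.card_erase_of_mem hu0
  have hbal' : ∀ i : Fin p, 2 * (R'.filter (fun v => v.1 = i)).card ≤ R'.card := by
    intro i
    by_cases hij : i = j
    · have hss : R'.filter (fun v => v.1 = i) ⊆ (R.filter (fun v => v.1 = i)).erase u0 := by
        intro x hx
        rw [Finset.mem_filter, hR', Finset.mem_erase] at hx
        rw [Finset.mem_erase, Finset.mem_filter]
        tauto
      have h2 := Finset.card_le_card hss
      rw [Finset.card_erase_of_mem (by rw [Finset.mem_filter]; exact ⟨hu0, hij.symm⟩)] at h2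
      have h3 := hbal i
      omega
    · have hss : R'.filter (fun v => v.1 = i) ⊆ R.filter (fun v => v.1 = i) :=
        Finset.filter_subset_filter _ (Finset.erase_subset _ _)
      have h2 := Finset.card_le_card hss
      have h3 := hbal i
      omega
  have heven' : Even R'.card := by
    rw [hcard']
    exact Nat.even_sub' (by omega) |>.2 (by simp [Nat.odd_iff, hodd'])
  obtain ⟨M', hmem', hgood', hcover', hcard2'⟩ := exists_pairing R' hbal' heven'
  -- an avoidant pair exists
  have hbalj := hbal j
  have havoid : ∃ q0 ∈ M', ¬ q0.1.1 = j ∧ ¬ q0.2.1 = j := by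
    by_contra hcon
    push_neg at hcon
    set f : (Fin p × Fin m) × (Fin p × Fin m) → Fin p × Fin m :=
      fun q => if q.1.1 = j then q.1 else q.2 with hf
    have hmaps : ∀ q ∈ M', f q ∈ R'.filter (fun v => v.1 = j) := by
      intro q hq
      rw [hf]
      by_cases h : q.1.1 = j
      · simp only [if_pos h]
        exact Finset.mem_filter.2 ⟨(hmem' q hq).1, h⟩
      · simp only [if_neg h]
        exact Finset.mem_filter.2 ⟨(hmem' q hq).2.1, hcon q hq h⟩
    have hinj : Set.InjOn f M' := by
      intro q hq q' hq' heq
      by_contra hne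
      have hd := hgood'.2 q hq q' hq' hne
      rw [hf] at heq
      by_cases h1 : q.1.1 = j <;> by_cases h2 : q'.1.1 = j <;>
        simp only [if_pos, if_neg, h1, h2] at heq
      · exact hd.1 heq
      · exact hd.2.1 heq
      · exact hd.2.2.1 heq
      · exact hd.2.2.2 heq
    have hcle := Finset.card_le_card_of_injOn f hmaps hinj
    have hss : R'.filter (fun v => v.1 = j) ⊆ (R.filter (fun v => v.1 = j)).erase u0 := by
      intro x hx
      rw [Finset.mem_filter, hR', Finset.mem_erase] at hx
      rw [Finset.mem_erase, Finset.mem_filter]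
      tauto
    have h2 := Finset.card_le_card hss
    rw [Finset.card_erase_of_mem (by rw [Finset.mem_filter]; exact ⟨hu0, rfl⟩)] at h2
    have hRj1 : 1 ≤ (R.filter (fun v => v.1 = j)).card :=
      Finset.card_pos.2 ⟨u0, Finset.mem_filter.2 ⟨hu0, rfl⟩⟩
    omega
  obtain ⟨q0, hq0, ha1, hc1⟩ := havoid
  obtain ⟨haR', hcR', hac1⟩ := hmem' q0 hq0
  -- basic distinctness facts
  have hu0notR' : u0 ∉ R' := Finset.notMem_erase _ _
  have hmovu0 : τ u0 ≠ u0 := ((mem_reps τ).1 hu0).1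
  have hwitu0 : (τ u0).1 = u0.1 := ((mem_reps τ).1 hu0).2.1
  have htu0R : τ u0 ∉ R := tau_rep_not_rep τ hτ hu0
  have htu0R' : τ u0 ∉ R' := fun h => htu0R ((Finset.erase_subset _ _) h)
  have hR'subR : R' ⊆ R := Finset.erase_subset _ _
  have hau0 : q0.1 ≠ u0 := fun h => hu0notR' (h ▸ haR')
  have hcu0 : q0.2 ≠ u0 := fun h => hu0notR' (h ▸ hcR')
  have hatu0 : q0.1 ≠ τ u0 := fun h => htu0R' (h ▸ haR')
  have hctu0 : q0.2 ≠ τ u0 := fun h => htu0R' (h ▸ hcR')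
  have hu0tu0 : u0 ≠ τ u0 := fun h => hmovu0 h.symm
  have hM'' : ∀ q ∈ M'.erase q0,
      q.1 ≠ u0 ∧ q.1 ≠ τ u0 ∧ q.1 ≠ q0.1 ∧ q.1 ≠ q0.2 ∧
      q.2 ≠ u0 ∧ q.2 ≠ τ u0 ∧ q.2 ≠ q0.1 ∧ q.2 ≠ q0.2 := by
    intro q hq
    rw [Finset.mem_erase] at hq
    have hd := hgood'.2 q hq.2 q0 hq0 hq.1
    obtain ⟨h1, h2, h3⟩ := hmem' q hq.2
    refine ⟨fun h => hu0notR' (h ▸ h1), fun h => htu0R' (h ▸ h1), hd.1, hd.2.1,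
      fun h => hu0notR' (h ▸ h2), fun h => htu0R' (h ▸ h2), hd.2.2.1, hd.2.2.2⟩
  set S := insert (u0, q0.1) (insert (τ u0, q0.2) (M'.erase q0)) with hS
  have hmemS : ∀ q, q ∈ S ↔ q = (u0, q0.1) ∨ q = (τ u0, q0.2) ∨ q ∈ M'.erase q0 := by
    intro q
    rw [hS]
    simp [Finset.mem_insert]
  -- GoodPairs S
  have hgoodS : GoodPairs S := by
    constructor
    · intro q hq
      rcases (hmemS q).1 hq with h | h | h
      · subst h; exact hau0.symm
      · subst h; exact hctu0.symm
      · exact hgood'.1 q (Finset.mem_of_mem_erase h)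
    · intro q hq q' hq' hne
      have haneqc : q0.1 ≠ q0.2 := fun hh => hac1 (congrArg Prod.fst hh)
      rcases (hmemS q).1 hq with h | h | h <;> rcases (hmemS q').1 hq' with h' | h' | h'
      · exact absurd (h.trans h'.symm) hne
      · subst h; subst h'
        exact ⟨hu0tu0, fun hh => hcu0 hh.symm, hatu0, haneqc⟩
      · subst h
        have hd := hM'' q' h'
        exact ⟨hd.1.symm, hd.2.2.2.2.1.symm, hd.2.2.1.symm, hd.2.2.2.2.2.2.1.symm⟩
      · subst h; subst h'
        exact ⟨hu0tu0.symm, hatu0.symm, hcu0, haneqc.symm⟩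
      · exact absurd (h.trans h'.symm) hne
      · subst h
        have hd := hM'' q' h'
        exact ⟨hd.2.1.symm, hd.2.2.2.2.2.1.symm, hd.2.2.2.1.symm, hd.2.2.2.2.2.2.2.symm⟩
      · subst h'
        have hd := hM'' q h
        exact ⟨hd.1, hd.2.2.1, hd.2.2.2.2.1, hd.2.2.2.2.2.2.1⟩
      · subst h'
        have hd := hM'' q h
        exact ⟨hd.2.1, hd.2.2.2.1, hd.2.2.2.2.2.1, hd.2.2.2.2.2.2.2⟩
      · exact hgood'.2 q (Finset.mem_of_mem_erase h) q' (Finset.mem_of_mem_erase h') hne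
  -- crossness
  have hcrossS : ∀ q ∈ S, q.1.1 ≠ q.2.1 := by
    intro q hq
    rcases (hmemS q).1 hq with h | h | h
    · subst h; exact fun hh => ha1 hh.symm
    · subst h
      intro hh
      rw [hwitu0] at hh
      exact hc1 hh.symm
    · exact (hmem' q (Finset.mem_of_mem_erase h)).2.2
  -- coordinates of S
  have hcoordS : ∀ v, IsCoord S v → v ∈ R ∨ v = τ u0 := by
    rintro v (⟨q, hq, rfl⟩ | ⟨q, hq, rfl⟩) <;> rcases (hmemS q).1 hq with h | h | h
    · subst h; exact Or.inl hu0
    · subst h; exact Or.inr rfl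
    · exact Or.inl (hR'subR (hmem' q (Finset.mem_of_mem_erase h)).1)
    · subst h; exact Or.inl (hR'subR haR')
    · subst h; exact Or.inl (hR'subR hcR')
    · exact Or.inl (hR'subR (hmem' q (Finset.mem_of_mem_erase h)).2.1)
  have hcoverS : ∀ v ∈ R, IsCoord S v := by
    intro v hv
    by_cases hvu0 : v = u0
    · exact Or.inl ⟨(u0, q0.1), (hmemS _).2 (Or.inl rfl), hvu0.symm⟩
    · have hv' : v ∈ R' := Finset.mem_erase.2 ⟨hvu0, hv⟩
      rcases hcover' v hv' with ⟨q, hq, hh⟩ | ⟨q, hq, hh⟩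
      · by_cases hqq0 : q = q0
        · rw [hqq0] at hh
          exact Or.inr ⟨(u0, q0.1), (hmemS _).2 (Or.inl rfl), hh⟩
        · exact Or.inl ⟨q, (hmemS _).2 (Or.inr (Or.inr (Finset.mem_erase.2 ⟨hqq0, hq⟩))), hh⟩
      · by_cases hqq0 : q = q0
        · rw [hqq0] at hh
          exact Or.inr ⟨(τ u0, q0.2), (hmemS _).2 (Or.inr (Or.inl rfl)), hh⟩
        · exact Or.inr ⟨q, (hmemS _).2 (Or.inr (Or.inr (Finset.mem_erase.2 ⟨hqq0, hq⟩))), hh⟩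
  refine ⟨S, hgoodS, hcrossS, ?_⟩
  apply sep_master τ hτ S hgoodS hcrossS
  · intro u hu hw
    rcases rep_or τ hτ hu hw with h | h
    · exact Or.inl (hcoverS u h)
    · exact Or.inr (hcoverS _ h)
  · -- P2 : both ends coordinates
    intro u hu cu ct
    have hswu0 : swapFn S u0 = q0.1 := swapFn_fst hgoodS ((hmemS _).2 (Or.inl rfl))
    have hswtu0 : swapFn S (τ u0) = q0.2 := swapFn_fst hgoodS ((hmemS _).2 (Or.inr (Or.inl rfl)))
    rcases hcoordS u cu with h1 | h1 <;> rcases hcoordS (τ u) ct with h2 | h2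
    · exact absurd h2 (tau_rep_not_rep τ hτ h1)
    · -- τ u = τ u0, so u = u0
      have huu0 : u = u0 := by
        have := congrArg τ h2
        rw [hτ u, hτ u0] at this
        exact this
      subst huu0
      rw [h2, hswu0, hswtu0]
      exact hac1
    · -- u = τ u0, τ u = u0
      subst h1
      rw [hτ u0, hswu0, hswtu0]
      exact hac1.symm
    · -- u = τ u0 and τ u = τ u0 : impossible
      rw [h1] at hu
      rw [h1, hτ u0] at h2
      exact absurd h2 (fun hh => hu0tu0 hh)
  · -- P3 : cross movers are never coordinates
    intro u hu hcr cu _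
    rcases hcoordS u cu with h1 | h1
    · exact absurd ((mem_reps τ).1 h1).2.1 hcr
    · subst h1
      rw [hτ u0] at hcr
      exact absurd hwitu0.symm hcr

end RT14

namespace RT14
open Equiv Finset

variable {p m : ℕ} (τ : Equiv.Perm (Fin p × Fin m))

theorem sep_maj (hp : 2 ≤ p) (hτ : Invol τ) (i : Fin p)
    (hmaj : (Reps τ).card < 2 * ((Reps τ).filter (fun v => v.1 = i)).card) :
    ∃ S, SepConcl τ S := by
  classical
  set R := Reps τ with hR
  set Ri := R.filter (fun v => v.1 = i) with hRi
  set Rout := R.filter (fun v => ¬ v.1 = i) with hRout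
  have hsplitR : Ri.card + Rout.card = R.card :=
    Finset.card_filter_add_card_filter_not (s := R) (fun v => v.1 = i)
  have hout_le : Rout.card ≤ Ri.card := by omega
  obtain ⟨t, htsub, htcard⟩ := Finset.exists_subset_card_eq hout_le
  set R'' := Rout ∪ t with hR''
  have hdisjRt : Disjoint Rout t := by
    rw [Finset.disjoint_left]
    intro x hx1 hx2
    have h1 := (Finset.mem_filter.1 hx1).2
    have h2 := (Finset.mem_filter.1 (htsub hx2)).2
    exact h1 h2
  have hcard'' : R''.card = 2 * Rout.card := by
    rw [hR'', Finset.card_union_of_disjoint hdisjRt, htcard]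
    omega
  have hR''subR : R'' ⊆ R := by
    intro x hx
    rcases Finset.mem_union.1 hx with h | h
    · exact (Finset.mem_filter.1 h).1
    · exact (Finset.mem_filter.1 (htsub h)).1
  have hbal'' : ∀ k : Fin p, 2 * (R''.filter (fun v => v.1 = k)).card ≤ R''.card := by
    intro k
    by_cases hk : k = i
    · subst hk
      have he : R''.filter (fun v => v.1 = k) = t := by
        ext x
        rw [Finset.mem_filter, hR'', Finset.mem_union]
        constructor
        · rintro ⟨h1 | h1, h2⟩
          · exact absurd h2 (Finset.mem_filter.1 h1).2
          · exact h1
        · intro hx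
          exact ⟨Or.inr hx, (Finset.mem_filter.1 (htsub hx)).2⟩
      rw [he, htcard, hcard'']
    · have hss : R''.filter (fun v => v.1 = k) ⊆ Rout := by
        intro x hx
        obtain ⟨h1, h2⟩ := Finset.mem_filter.1 hx
        rcases Finset.mem_union.1 h1 with h | h
        · exact h
        · exfalso
          exact hk (h2.symm.trans (Finset.mem_filter.1 (htsub h)).2)
      have := Finset.card_le_card hss
      omega
  have heven'' : Even R''.card := by rw [hcard'']; exact ⟨Rout.card, by omega⟩
  obtain ⟨M, hmemM, hgoodM, hcoverM, -⟩ := exists_pairing R'' hbal'' heven''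
  set Lf := Ri \ t with hLf
  have hLfcard : Lf.card = Ri.card - Rout.card := by
    rw [hLf, Finset.card_sdiff_of_subset htsub, htcard]
  -- resources
  set Fo := Finset.univ.filter (fun v : Fin p × Fin m => ¬ v.1 = i ∧ τ v = v) with hFo
  set CR := Finset.univ.filter (fun v : Fin p × Fin m =>
    (((¬ v.1 = i ∧ ¬ τ v = v) ∧ ¬ (τ v).1 = v.1) ∧ ¬ (τ v).1 = i) ∧ v.1 < (τ v).1) with hCR
  have hdisjX : Disjoint Fo CR := by
    rw [Finset.disjoint_left]
    intro x hx1 hx2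
    rw [hFo, Finset.mem_filter] at hx1
    rw [hCR, Finset.mem_filter] at hx2
    exact hx2.2.1.1.1.2 hx1.2.2
  set X := Fo ∪ CR with hX
  -- the counting argument
  have hcount : Lf.card ≤ X.card := by
    have cpart : (Finset.univ.filter (fun v : Fin p × Fin m => v.1 = i)).card = m := card_part i
    have csplit : (Finset.univ.filter (fun v : Fin p × Fin m => v.1 = i)).card
        + (Finset.univ.filter (fun v : Fin p × Fin m => ¬ v.1 = i)).card = p * m :=
      card_part_split i
    have c1 : (Finset.univ.filter (fun v : Fin p × Fin m => v.1 = i ∧ τ v = v)).card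
        + (Finset.univ.filter (fun v : Fin p × Fin m => v.1 = i ∧ ¬ τ v = v)).card
        = (Finset.univ.filter (fun v : Fin p × Fin m => v.1 = i)).card :=
      card_split _ _
    have c2 : (Finset.univ.filter (fun v : Fin p × Fin m =>
          (v.1 = i ∧ ¬ τ v = v) ∧ (τ v).1 = v.1)).card
        + (Finset.univ.filter (fun v : Fin p × Fin m =>
          (v.1 = i ∧ ¬ τ v = v) ∧ ¬ (τ v).1 = v.1)).card
        = (Finset.univ.filter (fun v : Fin p × Fin m => v.1 = i ∧ ¬ τ v = v)).card :=
      card_split _ _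
    have c3 : (Finset.univ.filter (fun v : Fin p × Fin m =>
          (v.1 = i ∧ ¬ τ v = v) ∧ (τ v).1 = v.1)).card
        = 2 * ((Reps τ).filter (fun v => v.1 = i)).card :=
      within_double τ hτ (fun x => x = i)
    have c4 : (Finset.univ.filter (fun v : Fin p × Fin m => ¬ v.1 = i ∧ τ v = v)).card
        + (Finset.univ.filter (fun v : Fin p × Fin m => ¬ v.1 = i ∧ ¬ τ v = v)).card
        = (Finset.univ.filter (fun v : Fin p × Fin m => ¬ v.1 = i)).card :=
      card_split _ _
    have c5 : (Finset.univ.filter (fun v : Fin p × Fin m =>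
          (¬ v.1 = i ∧ ¬ τ v = v) ∧ (τ v).1 = v.1)).card
        + (Finset.univ.filter (fun v : Fin p × Fin m =>
          (¬ v.1 = i ∧ ¬ τ v = v) ∧ ¬ (τ v).1 = v.1)).card
        = (Finset.univ.filter (fun v : Fin p × Fin m => ¬ v.1 = i ∧ ¬ τ v = v)).card :=
      card_split _ _
    have c6 : (Finset.univ.filter (fun v : Fin p × Fin m =>
          (¬ v.1 = i ∧ ¬ τ v = v) ∧ (τ v).1 = v.1)).card
        = 2 * ((Reps τ).filter (fun v => ¬ v.1 = i)).card :=
      within_double τ hτ (fun x => ¬ x = i)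
    have c7 : (Finset.univ.filter (fun v : Fin p × Fin m =>
          ((¬ v.1 = i ∧ ¬ τ v = v) ∧ ¬ (τ v).1 = v.1) ∧ (τ v).1 = i)).card
        + (Finset.univ.filter (fun v : Fin p × Fin m =>
          ((¬ v.1 = i ∧ ¬ τ v = v) ∧ ¬ (τ v).1 = v.1) ∧ ¬ (τ v).1 = i)).card
        = (Finset.univ.filter (fun v : Fin p × Fin m =>
          (¬ v.1 = i ∧ ¬ τ v = v) ∧ ¬ (τ v).1 = v.1)).card :=
      card_split _ _
    have c8 : (Finset.univ.filter (fun v : Fin p × Fin m =>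
          ((¬ v.1 = i ∧ ¬ τ v = v) ∧ ¬ (τ v).1 = v.1) ∧ ¬ (τ v).1 = i)).card
        = 2 * CR.card := cross_far_double τ hτ i
    have c9 : (Finset.univ.filter (fun v : Fin p × Fin m =>
          ((¬ v.1 = i ∧ ¬ τ v = v) ∧ ¬ (τ v).1 = v.1) ∧ (τ v).1 = i)).card
        = (Finset.univ.filter (fun v : Fin p × Fin m =>
          (v.1 = i ∧ ¬ τ v = v) ∧ ¬ (τ v).1 = v.1)).card := cross_near_card τ hτ i
    have c10 : 2 * m ≤ p * m := Nat.mul_le_mul_right m hp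
    have cX : X.card = Fo.card + CR.card := Finset.card_union_of_disjoint hdisjX
    rw [← hR, ← hRi] at c3
    rw [← hR, ← hRout] at c6
    rw [← hFo] at c4
    rw [hLfcard]
    omega
  -- build S2
  obtain ⟨X', hX'sub, hX'card⟩ := Finset.exists_subset_card_eq hcount
  have hEq : Lf.card = X'.card := hX'card.symm
  set e : {x // x ∈ Lf} ≃ {x // x ∈ X'} := Finset.equivOfCardEq hEq with he
  set S2 : Finset ((Fin p × Fin m) × (Fin p × Fin m)) :=
    Lf.attach.image (fun y : {x // x ∈ Lf} => (y.val, (e y).val)) with hS2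
  have hmemS2 : ∀ q, q ∈ S2 ↔ ∃ y : {x // x ∈ Lf}, q = (y.val, (e y).val) := by
    intro q
    rw [hS2, Finset.mem_image]
    constructor
    · rintro ⟨y, -, rfl⟩; exact ⟨y, rfl⟩
    · rintro ⟨y, rfl⟩; exact ⟨y, Finset.mem_attach _ _, rfl⟩
  -- basic part facts
  have hLfR : Lf ⊆ R := fun x hx => (Finset.mem_filter.1 (Finset.mem_sdiff.1 hx).1).1
  have hLfpart : ∀ x ∈ Lf, x.1 = i := fun x hx =>
    (Finset.mem_filter.1 (Finset.mem_sdiff.1 hx).1).2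
  have hXpart : ∀ x ∈ X, ¬ x.1 = i := by
    intro x hx
    rcases Finset.mem_union.1 hx with h | h
    · exact (Finset.mem_filter.1 h).2.1
    · exact (Finset.mem_filter.1 h).2.1.1.1.1
  have hXnotR : ∀ x ∈ X, x ∉ R := by
    intro x hx hxR
    obtain ⟨hmv, hwit, -⟩ := (mem_reps τ).1 hxR
    rcases Finset.mem_union.1 hx with h | h
    · exact hmv (Finset.mem_filter.1 h).2.2
    · exact (Finset.mem_filter.1 h).2.1.1.2 hwit
  have hX'X : X' ⊆ X := hX'sub
  set S := M ∪ S2 with hS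
  have hmemS : ∀ q, q ∈ S ↔ q ∈ M ∨ q ∈ S2 := fun q => Finset.mem_union
  -- coords of M are in R''
  have hMcoord : ∀ q ∈ M, q.1 ∈ R'' ∧ q.2 ∈ R'' := fun q hq => ⟨(hmemM q hq).1, (hmemM q hq).2.1⟩
  -- S2 coords
  have hS2coord : ∀ q ∈ S2, q.1 ∈ Lf ∧ q.2 ∈ X' := by
    intro q hq
    obtain ⟨y, rfl⟩ := (hmemS2 q).1 hq
    exact ⟨y.2, (e y).2⟩
  -- disjointness of coordinate pools
  have hLfR'' : ∀ x ∈ Lf, x ∉ R'' := by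
    intro x hx hx2
    rcases Finset.mem_union.1 hx2 with h | h
    · exact (Finset.mem_filter.1 h).2 (hLfpart x hx)
    · exact (Finset.mem_sdiff.1 hx).2 h
  have hXR'' : ∀ x ∈ X, x ∉ R'' := fun x hx hx2 => hXnotR x hx (hR''subR hx2)
  have hLfX : ∀ x ∈ Lf, x ∉ X := fun x hx hx2 => hXnotR x hx2 (hLfR hx)
  -- GoodPairs S
  have hgoodS : GoodPairs S := by
    constructor
    · intro q hq
      rcases (hmemS q).1 hq with h | h
      · exact hgoodM.1 q h
      · obtain ⟨h1, h2⟩ := hS2coord q h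
        intro hh
        exact hXpart _ (hX'X h2) (hh ▸ hLfpart _ h1)
    · intro q hq q' hq' hne
      rcases (hmemS q).1 hq with h | h <;> rcases (hmemS q').1 hq' with h' | h'
      · exact hgoodM.2 q h q' h' hne
      · obtain ⟨hq1, hq2⟩ := hMcoord q h
        obtain ⟨hp1, hp2⟩ := hS2coord q' h'
        exact ⟨fun hh => hLfR'' _ hp1 (hh ▸ hq1), fun hh => hXR'' _ (hX'X hp2) (hh ▸ hq1),
          fun hh => hLfR'' _ hp1 (hh ▸ hq2), fun hh => hXR'' _ (hX'X hp2) (hh ▸ hq2)⟩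
      · obtain ⟨hq1, hq2⟩ := hS2coord q h
        obtain ⟨hp1, hp2⟩ := hMcoord q' h'
        exact ⟨fun hh => hLfR'' _ hq1 (hh ▸ hp1), fun hh => hLfR'' _ hq1 (hh ▸ hp2),
          fun hh => hXR'' _ (hX'X hq2) (hh ▸ hp1), fun hh => hXR'' _ (hX'X hq2) (hh ▸ hp2)⟩
      · obtain ⟨y, rfl⟩ := (hmemS2 q).1 h
        obtain ⟨y', rfl⟩ := (hmemS2 q').1 h'
        have hyy : y ≠ y' := by
          intro hh
          exact hne (by rw [hh])
        have hvv : y.val ≠ y'.val := fun hh => hyy (Subtype.ext hh)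
        have hee : (e y).val ≠ (e y').val := by
          intro hh
          exact hyy (e.injective (Subtype.ext hh))
        refine ⟨hvv, ?_, ?_, hee⟩
        · intro hh
          have hh' : y.val = (e y').val := hh
          exact hXpart _ (hX'X (e y').2) (hh' ▸ hLfpart _ y.2)
        · intro hh
          have hh' : (e y).val = y'.val := hh
          exact hXpart _ (hX'X (e y).2) (hh'.symm ▸ hLfpart _ y'.2)
  -- crossness
  have hcrossS : ∀ q ∈ S, q.1.1 ≠ q.2.1 := by
    intro q hq
    rcases (hmemS q).1 hq with h | h
    · exact (hmemM q h).2.2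
    · obtain ⟨h1, h2⟩ := hS2coord q h
      intro hh
      exact hXpart _ (hX'X h2) (hh ▸ hLfpart _ h1)
  -- coordinates characterization
  have hcoordS : ∀ v, IsCoord S v → v ∈ R ∨ v ∈ X' := by
    rintro v (⟨q, hq, rfl⟩ | ⟨q, hq, rfl⟩) <;> rcases (hmemS q).1 hq with h | h
    · exact Or.inl (hR''subR (hMcoord q h).1)
    · exact Or.inl (hLfR (hS2coord q h).1)
    · exact Or.inl (hR''subR (hMcoord q h).2)
    · exact Or.inr (hS2coord q h).2
  -- cover of reps
  have hcoverS : ∀ v ∈ R, IsCoord S v := by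
    intro v hv
    by_cases hvi : v.1 = i
    · have hvRi : v ∈ Ri := Finset.mem_filter.2 ⟨hv, hvi⟩
      by_cases hvt : v ∈ t
      · have : v ∈ R'' := Finset.mem_union.2 (Or.inr hvt)
        rcases hcoverM v this with ⟨q, hq, hh⟩ | ⟨q, hq, hh⟩
        · exact Or.inl ⟨q, (hmemS q).2 (Or.inl hq), hh⟩
        · exact Or.inr ⟨q, (hmemS q).2 (Or.inl hq), hh⟩
      · have hvLf : v ∈ Lf := Finset.mem_sdiff.2 ⟨hvRi, hvt⟩
        refine Or.inl ⟨((⟨v, hvLf⟩ : {x // x ∈ Lf}).val, (e ⟨v, hvLf⟩).val), ?_, rfl⟩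
        exact (hmemS _).2 (Or.inr ((hmemS2 _).2 ⟨⟨v, hvLf⟩, rfl⟩))
    · have : v ∈ R'' := Finset.mem_union.2 (Or.inl (Finset.mem_filter.2 ⟨hv, hvi⟩))
      rcases hcoverM v this with ⟨q, hq, hh⟩ | ⟨q, hq, hh⟩
      · exact Or.inl ⟨q, (hmemS q).2 (Or.inl hq), hh⟩
      · exact Or.inr ⟨q, (hmemS q).2 (Or.inl hq), hh⟩
  -- membership in X' of movers implies CR facts
  have hX'mover : ∀ x ∈ X', τ x ≠ x → x ∈ CR := by
    intro x hx hmv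
    rcases Finset.mem_union.1 (hX'X hx) with h | h
    · exact absurd (Finset.mem_filter.1 h).2.2 hmv
    · exact h
  refine ⟨S, hgoodS, hcrossS, ?_⟩
  apply sep_master τ hτ S hgoodS hcrossS
  · intro u hu hw
    rcases rep_or τ hτ hu hw with h | h
    · exact Or.inl (hcoverS u h)
    · exact Or.inr (hcoverS _ h)
  · -- P2
    intro u hu cu ct
    exfalso
    have hu' : τ (τ u) ≠ τ u := by rw [hτ u]; exact fun h => hu h.symm
    rcases hcoordS u cu with h1 | h1 <;> rcases hcoordS (τ u) ct with h2 | h2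
    · exact tau_rep_not_rep τ hτ h1 h2
    · have hCR := hX'mover _ h2 hu'
      have := (Finset.mem_filter.1 hCR).2.1.1.2
      rw [hτ u] at this
      exact this ((mem_reps τ).1 h1).2.1.symm
    · have hCR := hX'mover _ h1 hu
      have hwit := ((mem_reps τ).1 h2).2.1
      rw [hτ u] at hwit
      exact (Finset.mem_filter.1 hCR).2.1.1.2 hwit.symm
    · have hCR1 := hX'mover _ h1 hu
      have hCR2 := hX'mover _ h2 hu'
      have l1 := (Finset.mem_filter.1 hCR1).2.2
      have l2 := (Finset.mem_filter.1 hCR2).2.2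
      rw [hτ u] at l2
      exact absurd (l1.trans l2) (lt_irrefl _)
  · -- P3
    intro u hu hcr cu hct
    rcases hcoordS u cu with h1 | h1
    · exact absurd ((mem_reps τ).1 h1).2.1 hcr
    · have hCR := hX'mover _ h1 hu
      obtain ⟨q, hq, hcase⟩ := swapFn_coord_cases hgoodS cu
      have hUnotR : u ∉ R := hXnotR _ (hX'X h1)
      rcases (hmemS q).1 hq with h | h
      · exfalso
        rcases hcase with ⟨hh, -⟩ | ⟨hh, -⟩
        · exact hUnotR (hh ▸ hR''subR (hMcoord q h).1)
        · exact hUnotR (hh ▸ hR''subR (hMcoord q h).2)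
      · rcases hcase with ⟨hh, -⟩ | ⟨hh, hval⟩
        · exact absurd (hh ▸ hLfR (hS2coord q h).1) hUnotR
        · rw [hval]
          have hq1i : q.1.1 = i := hLfpart _ (hS2coord q h).1
          have htui : ¬ (τ u).1 = i := (Finset.mem_filter.1 hCR).2.1.2
          rw [hq1i]
          exact fun hh2 => htui hh2.symm

end RT14

/-! ## Final assembly -/

namespace RT14
open Equiv Finset

variable {p m : ℕ}

def Cross (g : Equiv.Perm (Fin p × Fin m)) : Prop :=
  Invol g ∧ ∀ v, g v ≠ v → (g v).1 ≠ v.1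

theorem exists_sep (hp : 2 ≤ p) (τ : Equiv.Perm (Fin p × Fin m)) (hτ : Invol τ) :
    ∃ S, SepConcl τ S := by
  by_cases hmaj : ∃ i, (Reps τ).card < 2 * ((Reps τ).filter (fun v => v.1 = i)).card
  · obtain ⟨i, hi⟩ := hmaj
    exact sep_maj τ hp hτ i hi
  · push_neg at hmaj
    by_cases he : Even (Reps τ).card
    · exact sep_nomaj_even τ hτ hmaj he
    · exact sep_nomaj_odd τ hτ hmaj he

theorem invol_three_cross (hp : 2 ≤ p) (τ : Equiv.Perm (Fin p × Fin m)) (hτ : Invol τ) :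
    ∃ g b : Equiv.Perm (Fin p × Fin m), Cross g ∧ Cross b ∧ ∀ v, τ v = g (b (g v)) := by
  obtain ⟨S, hgood, hcross, hsep⟩ := exists_sep hp τ hτ
  set g := swapPerm S hgood with hg
  have hginv : Invol g := swapPerm_invol hgood
  set b := g * τ * g with hb
  have hbapp : ∀ v, b v = g (τ (g v)) := fun v => rfl
  have hbinv : Invol b := by
    intro v
    rw [hbapp, hbapp, hginv, hτ, hginv]
  refine ⟨g, b, ⟨hginv, ?_⟩, ⟨hbinv, ?_⟩, ?_⟩
  · intro v hv
    exact swapFn_part_ne hgood hcross (swapFn_ne_imp hv)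
  · intro v hv
    rw [hbapp] at hv ⊢
    have hmv : τ (g v) ≠ g v := by
      intro h
      rw [h, hginv] at hv
      exact hv rfl
    have hthis := hsep (g v) hmv
    have hgv : (swapFn S (g v)) = v := by
      show swapFn S (swapFn S v) = v
      exact swapFn_invol hgood v
    rw [hgv] at hthis
    exact hthis
  · intro v
    rw [hbapp, hginv, hginv]

theorem perm_six (hp : 2 ≤ p) (σ : Equiv.Perm (Fin p × Fin m)) :
    ∃ g1 b1 g2 b2 : Equiv.Perm (Fin p × Fin m), Cross g1 ∧ Cross b1 ∧ Cross g2 ∧ Cross b2 ∧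
      ∀ v, σ v = g1 (b1 (g1 (g2 (b2 (g2 v))))) := by
  obtain ⟨a, c, ha, hc, habc, -, -⟩ := exists_two_invol σ
  obtain ⟨g1, b1, hg1, hb1, hval1⟩ := invol_three_cross hp a ha
  obtain ⟨g2, b2, hg2, hb2, hval2⟩ := invol_three_cross hp c hc
  refine ⟨g1, b1, g2, b2, hg1, hb1, hg2, hb2, ?_⟩
  intro v
  rw [habc]
  show a (c v) = _
  rw [hval2 v, hval1 (g2 (b2 (g2 v)))]

end RT14

/-- the complete `p`-partite graph `K_{n/p,…,n/p}` (with `p ≥ 2`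
parts of equal size) has routing number at most `6`. -/
theorem stmt14 (p m : ℕ) (hp : 2 ≤ p) (hm : 1 ≤ m) :
    rt (multipartite p m) ≤ 6 := by
  classical
  apply Finset.sup_le
  intro σ _
  apply Nat.sInf_le
  show RoutesIn (multipartite p m) σ 6
  obtain ⟨g1, b1, g2, b2, hg1, hb1, hg2, hb2, hval⟩ := RT14.perm_six hp σ
  have hstep : ∀ g : Equiv.Perm (Fin p × Fin m), RT14.Cross g →
      IsMatchingStep (multipartite p m) g := by
    intro g hg
    refine ⟨hg.1, ?_⟩
    intro v hv
    have hne := hg.2 v hv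
    show ((⊤ : SimpleGraph (Fin p)).comap Prod.fst).Adj v (g v)
    rw [SimpleGraph.comap_adj]
    simp only [SimpleGraph.top_adj]
    exact fun h => hne h.symm
  refine ⟨[g2, b2, g2, g1, b1, g1], rfl, ?_, ?_⟩
  · intro τ' hτ'
    simp only [List.mem_cons, List.not_mem_nil, or_false] at hτ'
    rcases hτ' with rfl | rfl | rfl | rfl | rfl | rfl
    · exact hstep _ hg2
    · exact hstep _ hb2
    · exact hstep _ hg2
    · exact hstep _ hg1
    · exact hstep _ hb1
    · exact hstep _ hg1
  · intro v
    show g1 (b1 (g1 (g2 (b2 (g2 v))))) = σ v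
    exact (hval v).symm
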